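/- If G and H are reconstructions of each other with at least three vertices, then for every natural number k, G and H have the same number of vertices of degree k. -/

import Mathlib

open SimpleGraph

def IsReconstruction {V W : Type*} (G : SimpleGraph V) (H : SimpleGraph W) : Prop :=
  ∃ f : V ≃ W, ∀ v : V,
    Nonempty ((G.induce {w | w ≠ v}) ≃g (H.induce {w | w ≠ f v}))

private lemma image_edgeSet_induce {V : Type*} (G : SimpleGraph V) (v : V) :
    Sym2.map (Subtype.val : {w | w ≠ v} → V) '' (G.induce {w | w ≠ v}).edgeSet
      = G.edgeSet \ G.incidenceSet v := by
  ext e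
  constructor
  · rintro ⟨e', he', rfl⟩
    induction e' with
    | _ a b =>
      simp only [SimpleGraph.mem_edgeSet, comap_adj] at he'
      refine ⟨he', ?_⟩
      rintro ⟨-, hv⟩
      rw [Sym2.map_pair_eq, Sym2.mem_iff] at hv
      rcases hv with h | h
      · exact a.2 h.symm
      · exact b.2 h.symm
  · intro he
    induction e with
    | _ a b =>
      obtain ⟨hadj, hninc⟩ := he
      rw [SimpleGraph.mem_edgeSet] at hadj
      have ha : a ≠ v := by
        rintro rfl
        exact hninc ⟨hadj, Sym2.mem_mk_left a b⟩
      have hb : b ≠ v := by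
        rintro rfl
        exact hninc ⟨hadj, Sym2.mem_mk_right a b⟩
      exact ⟨s(⟨a, ha⟩, ⟨b, hb⟩), by simpa using hadj, by simp⟩

private lemma card_edgeSet_induce {V : Type*} [Fintype V] (G : SimpleGraph V)
    [DecidableRel G.Adj] (v : V) :
    Nat.card (G.induce {w | w ≠ v}).edgeSet + G.degree v = Nat.card G.edgeSet := by
  classical
  rw [Nat.card_coe_set_eq, Nat.card_coe_set_eq]
  have h1 : (G.induce {w | w ≠ v}).edgeSet.ncard
      = (G.edgeSet \ G.incidenceSet v).ncard := by
    rw [← image_edgeSet_induce G v,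
      Set.ncard_image_of_injective _ (Sym2.map.injective Subtype.val_injective)]
  have h2 : (G.incidenceSet v).ncard = G.degree v := by
    rw [Set.ncard_eq_toFinset_card', Set.toFinset_card, G.card_incidenceSet_eq_degree]
  rw [h1, ← h2]
  exact Set.ncard_diff_add_ncard_of_subset (G.incidenceSet_subset v) (Set.toFinite _)

private lemma sum_degrees_nat_card {V : Type*} [Fintype V] (G : SimpleGraph V)
    [DecidableRel G.Adj] : ∑ v, G.degree v = 2 * Nat.card G.edgeSet := by
  classical
  rw [G.sum_degrees_eq_twice_card_edges, Nat.card_coe_set_eq,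
    Set.ncard_eq_toFinset_card']
  congr 2

/-- Reconstructions have the same number of vertices of each degree. -/
theorem stmt_3 {V W : Type*} [Fintype V] [Fintype W]
    (G : SimpleGraph V) (H : SimpleGraph W)
    [DecidableRel G.Adj] [DecidableRel H.Adj]
    (hrec : IsReconstruction G H) (hcard : 3 ≤ Fintype.card V) :
    ∀ k : ℕ, Nat.card {v : V // G.degree v = k} = Nat.card {w : W // H.degree w = k} := by
  classical
  obtain ⟨f, hiso⟩ := hrec
  set eG := Nat.card G.edgeSet with heG
  set eH := Nat.card H.edgeSet with heH
  -- the deleted subgraphs have equal edge counts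
  have hsub : ∀ v : V, Nat.card (G.induce {w | w ≠ v}).edgeSet
      = Nat.card (H.induce {w | w ≠ f v}).edgeSet := by
    intro v
    obtain ⟨φ⟩ := hiso v
    exact Nat.card_congr φ.mapEdgeSet
  have hcardW : Fintype.card W = Fintype.card V := (Fintype.card_congr f).symm
  set n := Fintype.card V with hn
  -- edge count sums
  have hGsum : (∑ v : V, Nat.card (G.induce {w | w ≠ v}).edgeSet) + 2 * eG = n * eG := by
    have : ∑ v : V, (Nat.card (G.induce {w | w ≠ v}).edgeSet + G.degree v)
        = ∑ v : V, eG := by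
      refine Finset.sum_congr rfl fun v _ => ?_
      exact card_edgeSet_induce G v
    rw [Finset.sum_add_distrib, sum_degrees_nat_card, ← heG, Finset.sum_const,
      smul_eq_mul] at this
    exact this
  have hHsum : (∑ w : W, Nat.card (H.induce {x | x ≠ w}).edgeSet) + 2 * eH = n * eH := by
    have : ∑ w : W, (Nat.card (H.induce {x | x ≠ w}).edgeSet + H.degree w)
        = ∑ w : W, eH := by
      refine Finset.sum_congr rfl fun w _ => ?_
      exact card_edgeSet_induce H w
    rw [Finset.sum_add_distrib, sum_degrees_nat_card, ← heH, Finset.sum_const,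
      smul_eq_mul, Finset.card_univ, hcardW] at this
    exact this
  have hsums : (∑ v : V, Nat.card (G.induce {w | w ≠ v}).edgeSet)
      = ∑ w : W, Nat.card (H.induce {x | x ≠ w}).edgeSet := by
    rw [← Equiv.sum_comp f fun w => Nat.card (H.induce {x | x ≠ w}).edgeSet]
    exact Finset.sum_congr rfl fun v _ => hsub v
  -- equal edge counts
  have hedge : eG = eH := by
    have h1 : (n - 2) * eG = ∑ v : V, Nat.card (G.induce {w | w ≠ v}).edgeSet := by
      have : (n - 2) * eG + 2 * eG = n * eG := by
        rw [← add_mul]; congr 1; omega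
      omega
    have h2 : (n - 2) * eH = ∑ w : W, Nat.card (H.induce {x | x ≠ w}).edgeSet := by
      have : (n - 2) * eH + 2 * eH = n * eH := by
        rw [← add_mul]; congr 1; omega
      omega
    have : (n - 2) * eG = (n - 2) * eH := by rw [h1, h2, hsums]
    exact Nat.eq_of_mul_eq_mul_left (by omega) this
  -- degrees correspond under f
  have hdeg : ∀ v : V, G.degree v = H.degree (f v) := by
    intro v
    have h1 := card_edgeSet_induce G v
    have h2 := card_edgeSet_induce H (f v)
    rw [← heG] at h1
    rw [← heH] at h2
    have h3 := hsub v
    omega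
  intro k
  exact Nat.card_congr (Equiv.subtypeEquiv f fun v => by rw [hdeg v])
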